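/- If u is a unitary operator on a Hilbert space H, p is an orthogonal projection on H, and b = p u (1-p) and c = (1-p) u p are both partial isometries, then a = p u p satisfies: p - a*a and p - aa* are orthogonal projections. -/
import Mathlib


noncomputable section

/-- Let `u` be a unitary operator on a complex Hilbert space `H` and `p` an orthogonal
projection (self-adjoint idempotent).  If `b = p u (1-p)` and `c = (1-p) u p` are
partial isometries, then `a = p u p` satisfies: `p - a* a` and `p - a a*` are
orthogonal projections (self-adjoint idempotents). -/
theorem stmt3 {H : Type*} [NormedAddCommGroup H] [InnerProductSpace ℂ H]
    [CompleteSpace H]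
    (u p : H →L[ℂ] H)
    (hu : u ∈ unitary (H →L[ℂ] H))
    (hpidem : IsIdempotentElem p) (hpsa : IsSelfAdjoint p)
    (hb : (p * u * (1 - p)) * star (p * u * (1 - p)) * (p * u * (1 - p)) = p * u * (1 - p))
    (hc : ((1 - p) * u * p) * star ((1 - p) * u * p) * ((1 - p) * u * p) = (1 - p) * u * p) :
    (IsIdempotentElem (p - star (p * u * p) * (p * u * p)) ∧
      IsSelfAdjoint (p - star (p * u * p) * (p * u * p))) ∧
    (IsIdempotentElem (p - (p * u * p) * star (p * u * p)) ∧
      IsSelfAdjoint (p - (p * u * p) * star (p * u * p))) := by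
  have hp : p * p = p := hpidem
  have h1p : (1 - p) * (1 - p) = 1 - p := hpidem.one_sub
  have hsu : star u * u = 1 := hu.1
  have hus : u * star u = 1 := hu.2
  have hsp : star p = p := hpsa.star_eq
  have hs1p : star (1 - p) = 1 - p := by rw [star_sub, star_one, hsp]
  set a := p * u * p with ha
  set b := p * u * (1 - p) with hbdef
  set c := (1 - p) * u * p with hcdef
  -- p - a* a = c* c
  have key1 : p - star a * a = star c * c := by
    have sum : star a * a + star c * c = p := by
      rw [ha, hcdef]
      simp only [star_mul, hsp, hs1p, mul_assoc]
      rw [show p * (p * (u * p)) = p * (u * p) by rw [← mul_assoc, hp],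
        show (1 - p) * ((1 - p) * (u * p)) = (1 - p) * (u * p) by rw [← mul_assoc, h1p],
        ← mul_add, ← mul_add, ← add_mul, add_sub_cancel, one_mul, ← mul_assoc (star u) u p, hsu, one_mul, hp]
    rw [← sum]; abel
  -- p - a a* = b b*
  have key2 : p - a * star a = b * star b := by
    have sum : a * star a + b * star b = p := by
      rw [ha, hbdef]
      simp only [star_mul, hsp, hs1p, mul_assoc]
      rw [show p * (p * (star u * p)) = p * (star u * p) by rw [← mul_assoc, hp],
        show (1 - p) * ((1 - p) * (star u * p)) = (1 - p) * (star u * p) by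
          rw [← mul_assoc, h1p],
        ← mul_add, ← mul_add, ← add_mul, add_sub_cancel, one_mul, ← mul_assoc u (star u) p, hus, one_mul, hp]
    rw [← sum]; abel
  refine ⟨⟨?_, ?_⟩, ?_, ?_⟩
  · rw [key1]
    show star c * c * (star c * c) = star c * c
    calc star c * c * (star c * c) = star c * (c * star c * c) := by
          rw [mul_assoc, ← mul_assoc c]
      _ = star c * c := by rw [hc]
  · rw [key1]; exact IsSelfAdjoint.star_mul_self c
  · rw [key2]
    show b * star b * (b * star b) = b * star b
    calc b * star b * (b * star b) = (b * star b * b) * star b := by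
          rw [mul_assoc, ← mul_assoc b, ← mul_assoc]
      _ = b * star b := by rw [hb]
  · rw [key2]; exact IsSelfAdjoint.mul_star_self b
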